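/- Let (X, Y) be a 2-separation in a connected matroid M with no series or parallel pairs. Then (fcl(X), Y − fcl(X)) is also a 2-separation of M, where fcl denotes the full closure operator. -/

import Mathlib

open Set Matroid

variable {α β : Type*}

namespace NDP

/-- The rank of a set `X` in a matroid `M`: the largest cardinality of an
independent subset of `X` (intended for finite matroids). -/
noncomputable def rk (M : Matroid α) (X : Set α) : ℕ :=
  sSup {n : ℕ | ∃ I, M.Indep I ∧ I ⊆ X ∧ I.ncard = n}

/-- The connectivity function `λ_M(X) = r(X) + r(E − X) − r(M)`, valued in `ℤ`. -/
noncomputable def lam (M : Matroid α) (X : Set α) : ℤ :=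
  (rk M X : ℤ) + (rk M (M.E \ X) : ℤ) - (rk M M.E : ℤ)

/-- Deletion of a set of elements. -/
def delete (M : Matroid α) (D : Set α) : Matroid α := M ↾ (M.E \ D)

/-- Contraction of a set of elements, defined by duality. -/
def contract (M : Matroid α) (C : Set α) : Matroid α := (delete M✶ C)✶

/-- `X` is a `k`-separating set of `M`. -/
def Separating (M : Matroid α) (k : ℕ) (X : Set α) : Prop :=
  X ⊆ M.E ∧ lam M X ≤ (k : ℤ) - 1

/-- `X` is exactly `k`-separating in `M`. -/
def ExactlySeparating (M : Matroid α) (k : ℕ) (X : Set α) : Prop :=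
  X ⊆ M.E ∧ lam M X = (k : ℤ) - 1

/-- `(X, M.E \ X)` is a `k`-separation of `M`. -/
def IsKSeparation (M : Matroid α) (k : ℕ) (X : Set α) : Prop :=
  Separating M k X ∧ k ≤ X.ncard ∧ k ≤ (M.E \ X).ncard

/-- A matroid is connected if it has no 1-separations. -/
def Connected (M : Matroid α) : Prop := ∀ X, ¬ IsKSeparation M 1 X

/-- A matroid is 3-connected if it has no k-separations for k < 3. -/
def ThreeConnected (M : Matroid α) : Prop := ∀ k < 3, ∀ X, ¬ IsKSeparation M k X

/-- A circuit: a minimal dependent set. -/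
def Circuit (M : Matroid α) (C : Set α) : Prop :=
  C ⊆ M.E ∧ ¬ M.Indep C ∧ ∀ D, D ⊂ C → M.Indep D

def Cocircuit (M : Matroid α) (C : Set α) : Prop := Circuit M✶ C

def Triangle (M : Matroid α) (T : Set α) : Prop := Circuit M T ∧ T.ncard = 3

def Triad (M : Matroid α) (T : Set α) : Prop := Cocircuit M T ∧ T.ncard = 3

/-- `N` is a minor of `M`. -/
def Minor (N M : Matroid α) : Prop := ∃ C D, N = delete (contract M C) D

/-- `M` has a minor isomorphic to `N`. -/
def IsoMinor (M : Matroid α) (N : Matroid β) : Prop :=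
  ∃ (f : β → α) (hf : Set.InjOn f N.E), Minor (N.map f hf) M

/-- `X` is a set of representatives for the simplification of `M`:
one non-loop element from each parallel class. -/
def SimpRep (M : Matroid α) (X : Set α) : Prop :=
  X ⊆ M.E ∧ (∀ e ∈ X, M.Indep {e}) ∧
  (∀ e ∈ M.E, M.Indep {e} → ∃ f ∈ X, f ∈ M.closure {e}) ∧
  (∀ f ∈ X, ∀ g ∈ X, f ∈ M.closure {g} → f = g)

/-- `si M` (the simplification of `M`) is a 3-connected matroid. -/
def SiThreeConnected (M : Matroid α) : Prop :=
  ∀ X, SimpRep M X → ThreeConnected (M ↾ X)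

/-- `co M` (the cosimplification of `M`) is a 3-connected matroid. -/
def CoThreeConnected (M : Matroid α) : Prop := SiThreeConnected M✶

/-- The restriction of `M` to `P` is isomorphic to the rank-`r` uniform matroid on `P`. -/
def UnifRestr (M : Matroid α) (r : ℕ) (P : Set α) : Prop :=
  P ⊆ M.E ∧ ∀ X ⊆ P, (M.Indep X ↔ X.ncard ≤ r)

/-- A set is fully closed if it is closed in `M` and in `M✶`. -/
def FullClosed (M : Matroid α) (F : Set α) : Prop :=
  M.closure F = F ∧ M✶.closure F = F

/-- The full closure of `X`: the intersection of all fully closed sets containing `X`. -/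
def fcl (M : Matroid α) (X : Set α) : Set α :=
  ⋂₀ {F | X ⊆ F ∧ FullClosed M F}

/-- `(X, {z}, Y)` is a vertical 3-separation of `M`. -/
def VertThreeSep (M : Matroid α) (X : Set α) (z : α) (Y : Set α) : Prop :=
  X ∪ {z} ∪ Y = M.E ∧ Disjoint X Y ∧ z ∉ X ∧ z ∉ Y ∧
  IsKSeparation M 3 (X ∪ {z}) ∧ 3 ≤ rk M (X ∪ {z}) ∧ 3 ≤ rk M Y ∧
  IsKSeparation M 3 X ∧ 3 ≤ rk M X ∧ 3 ≤ rk M (Y ∪ {z}) ∧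
  z ∈ M.closure X ∧ z ∈ M.closure Y

/-- `M` is a wheel or a whirl: its ground set has a cyclic ordering of alternating
spokes and rims in which consecutive triples are alternately triangles and triads. -/
def IsWheelOrWhirl (M : Matroid α) : Prop :=
  ∃ (n : ℕ) (s r : ZMod n → α), 2 ≤ n ∧
    Function.Injective (fun p : ZMod n × Bool => if p.2 then s p.1 else r p.1) ∧
    Set.range s ∪ Set.range r = M.E ∧
    ∀ i : ZMod n, Triangle M {s i, r i, s (i + 1)} ∧ Triad M {r i, s (i + 1), r (i + 1)}

/-- `f` (restricted to `{0, …, k−1}`) is a fan ordering of length `k` in `M`. -/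
def IsFanOrd (M : Matroid α) (k : ℕ) (f : ℕ → α) : Prop :=
  3 ≤ k ∧ Set.InjOn f (Set.Iio k) ∧ (∀ i < k, f i ∈ M.E) ∧
  (Triangle M {f 0, f 1, f 2} ∨ Triad M {f 0, f 1, f 2}) ∧
  ∀ i, i + 3 < k →
    (Triangle M {f i, f (i+1), f (i+2)} → Triad M {f (i+1), f (i+2), f (i+3)}) ∧
    (Triad M {f i, f (i+1), f (i+2)} → Triangle M {f (i+1), f (i+2), f (i+3)})

/-- `F` is a fan of `M`. -/
def IsFan (M : Matroid α) (F : Set α) : Prop :=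
  ∃ k f, IsFanOrd M k f ∧ F = f '' Set.Iio k

/-- `F` is a maximal fan of `M`. -/
def IsMaximalFan (M : Matroid α) (F : Set α) : Prop :=
  IsFan M F ∧ ∀ F', IsFan M F' → F ⊆ F' → F' = F

end NDP


namespace NDPAux

variable {α : Type*} {M : Matroid α} {X Y I J B : Set α} {e : α} {n : ℕ}

lemma rk_le [M.Finite] (h : ∀ I, M.Indep I → I ⊆ X → I.ncard ≤ n) :
    NDP.rk M X ≤ n := by
  refine csSup_le ⟨0, ∅, M.empty_indep, empty_subset _, by simp⟩ ?_
  rintro m ⟨I, hI, hIX, rfl⟩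
  exact h I hI hIX

lemma le_rk [M.Finite] (hI : M.Indep I) (hIX : I ⊆ X) : I.ncard ≤ NDP.rk M X := by
  refine le_csSup ⟨M.E.ncard, ?_⟩ ⟨I, hI, hIX, rfl⟩
  rintro m ⟨J, hJ, _, rfl⟩
  exact Set.ncard_le_ncard hJ.subset_ground M.ground_finite

lemma rk_basis' [M.Finite] (hI : M.IsBasis' I X) : NDP.rk M X = I.ncard := by
  refine le_antisymm (rk_le fun J hJ hJX => ?_) (le_rk hI.indep hI.subset)
  obtain ⟨J', hJ', hJJ'⟩ := hJ.subset_isBasis'_of_subset hJX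
  have h1 : J.encard ≤ I.encard :=
    (Set.encard_mono hJJ').trans_eq (hJ'.encard_eq_encard hI)
  have hIfin : I.Finite := M.set_finite I hI.indep.subset_ground
  rw [Set.ncard_def, Set.ncard_def]
  exact ENat.toNat_le_toNat h1 hIfin.encard_lt_top.ne

lemma rk_mono [M.Finite] (h : X ⊆ Y) : NDP.rk M X ≤ NDP.rk M Y :=
  rk_le fun I hI hIX => le_rk hI (hIX.trans h)

lemma rk_le_ncard [M.Finite] (hX : X.Finite) : NDP.rk M X ≤ X.ncard :=
  rk_le fun _ _ hIX => Set.ncard_le_ncard hIX hX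

lemma rk_closure [M.Finite] : NDP.rk M (M.closure X) = NDP.rk M X := by
  obtain ⟨I, hI⟩ := M.exists_isBasis' X
  rw [rk_basis' hI.isBasis_closure_right.isBasis', rk_basis' hI]

lemma rk_base [M.Finite] (hB : M.IsBase B) : NDP.rk M M.E = B.ncard :=
  rk_basis' hB.isBasis_ground.isBasis'

lemma rk_submod [M.Finite] (X Y : Set α) :
    NDP.rk M (X ∪ Y) + NDP.rk M (X ∩ Y) ≤ NDP.rk M X + NDP.rk M Y := by
  obtain ⟨I, hI⟩ := M.exists_isBasis' (X ∩ Y)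
  obtain ⟨J, hJ, hIJ⟩ :=
    hI.indep.subset_isBasis'_of_subset (hI.subset.trans (inter_subset_left.trans subset_union_left))
  have hJfin : J.Finite := M.set_finite J hJ.indep.subset_ground
  rw [rk_basis' hI, rk_basis' hJ]
  have h1 : ((J ∩ X) ∩ (J ∩ Y)).ncard + ((J ∩ X) ∪ (J ∩ Y)).ncard
      = (J ∩ X).ncard + (J ∩ Y).ncard :=
    Set.ncard_inter_add_ncard_union _ _ (hJfin.subset inter_subset_left)
      (hJfin.subset inter_subset_left)
  have h2 : (J ∩ X) ∪ (J ∩ Y) = J := by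
    rw [← inter_union_distrib_left, inter_eq_self_of_subset_left hJ.subset]
  have h3 : I ⊆ (J ∩ X) ∩ (J ∩ Y) := by
    have := hI.subset
    intro x hx
    exact ⟨⟨hIJ hx, (hI.subset hx).1⟩, hIJ hx, (hI.subset hx).2⟩
  have h4 : I.ncard ≤ ((J ∩ X) ∩ (J ∩ Y)).ncard :=
    Set.ncard_le_ncard h3 (hJfin.subset (inter_subset_left.trans inter_subset_left))
  have h5 : (J ∩ X).ncard ≤ NDP.rk M X :=
    le_rk (hJ.indep.subset inter_subset_left) inter_subset_right
  have h6 : (J ∩ Y).ncard ≤ NDP.rk M Y :=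
    le_rk (hJ.indep.subset inter_subset_left) inter_subset_right
  rw [h2] at h1
  omega

lemma rk_dual_ground [M.Finite] :
    NDP.rk M✶ M.E + NDP.rk M M.E = M.E.ncard := by
  obtain ⟨B, hB⟩ := M.exists_isBase
  have h1 : NDP.rk M✶ M.E = (M.E \ B).ncard := by
    have := rk_base hB.compl_isBase_dual
    rwa [dual_ground] at this
  rw [h1, rk_base hB, Set.ncard_diff_add_ncard_of_subset hB.subset_ground M.ground_finite]

lemma rk_dual_ge [M.Finite] (hX : X ⊆ M.E) :
    X.ncard + NDP.rk M (M.E \ X) ≤ NDP.rk M✶ X + NDP.rk M M.E := by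
  obtain ⟨I, hI⟩ := M.exists_isBasis' (M.E \ X)
  obtain ⟨B, hB, hIB⟩ := hI.indep.exists_isBase_superset
  have hEfin := M.ground_finite
  have hBfin : B.Finite := hEfin.subset hB.subset_ground
  have hXfin : X.Finite := hEfin.subset hX
  have hd : M✶.Indep (X \ B) := by
    exact (dual_indep_iff_exists (M := M) (diff_subset.trans hX)).mpr
      ⟨B, hB, disjoint_sdiff_left⟩
  have h1 : (X \ B).ncard ≤ NDP.rk M✶ X := le_rk hd diff_subset
  have h2 : (X \ B).ncard + B.ncard = (X ∪ B).ncard := by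
    rw [← Set.ncard_union_eq disjoint_sdiff_left hXfin.diff hBfin, diff_union_self]
  have h3 : (X ∪ I).ncard ≤ (X ∪ B).ncard :=
    Set.ncard_le_ncard (union_subset_union_right _ hIB) (hXfin.union hBfin)
  have h4 : (X ∪ I).ncard = X.ncard + I.ncard := by
    rw [Set.ncard_union_eq _ hXfin (hEfin.subset hI.indep.subset_ground)]
    exact (disjoint_sdiff_left.mono_left hI.subset).symm
  have h5 := rk_basis' hI
  have h6 := rk_base hB
  omega

lemma rk_dual_eq [M.Finite] (hX : X ⊆ M.E) :
    NDP.rk M✶ X + NDP.rk M M.E = X.ncard + NDP.rk M (M.E \ X) := by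
  refine le_antisymm ?_ (rk_dual_ge hX)
  have h1 := rk_dual_ge (M := M✶) (X := M.E \ X) (show M.E \ X ⊆ M✶.E from diff_subset)
  rw [dual_dual, dual_ground, diff_diff_cancel_left hX] at h1
  have h2 := rk_dual_ground (M := M)
  have h3 : (M.E \ X).ncard + X.ncard = M.E.ncard :=
    Set.ncard_diff_add_ncard_of_subset hX M.ground_finite
  omega

lemma lam_def (M : Matroid α) (X : Set α) :
    NDP.lam M X = (NDP.rk M X : ℤ) + (NDP.rk M (M.E \ X) : ℤ) - (NDP.rk M M.E : ℤ) :=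
  rfl

lemma lam_dual [M.Finite] (hX : X ⊆ M.E) : NDP.lam M✶ X = NDP.lam M X := by
  have h1 := rk_dual_eq hX
  have h2 := rk_dual_eq (M := M) (X := M.E \ X) diff_subset
  have h3 := rk_dual_ground (M := M)
  have h4 : (M.E \ X).ncard + X.ncard = M.E.ncard :=
    Set.ncard_diff_add_ncard_of_subset hX M.ground_finite
  have h5 : M.E \ (M.E \ X) = X := diff_diff_cancel_left hX
  rw [h5] at h2
  rw [lam_def, lam_def, dual_ground]
  omega

lemma lam_closure_le [M.Finite] (hX : X ⊆ M.E) :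
    NDP.lam M (M.closure X) ≤ NDP.lam M X := by
  rw [lam_def, lam_def, rk_closure]
  have h1 : NDP.rk M (M.E \ M.closure X) ≤ NDP.rk M (M.E \ X) :=
    rk_mono (diff_subset_diff_right (M.subset_closure X hX))
  omega

lemma lam_coclosure_le [M.Finite] (hX : X ⊆ M.E) :
    NDP.lam M (M✶.closure X) ≤ NDP.lam M X := by
  have h1 : M✶.closure X ⊆ M.E := M✶.closure_subset_ground X
  rw [← lam_dual h1, ← lam_dual hX]
  exact lam_closure_le (M := M✶) (show X ⊆ M✶.E from hX)

/-- If `{a,b}` is a dependent pair of non-loops, it is a circuit. -/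
lemma pair_circuit (M : Matroid α) {a b : α} (hne : a ≠ b) (ha : M.Indep {a})
    (hb : M.Indep {b}) (hab : ¬ M.Indep {a, b}) (haE : a ∈ M.E) (hbE : b ∈ M.E) :
    NDP.Circuit M {a, b} := by
  refine ⟨by rw [Set.insert_subset_iff]; exact ⟨haE, Set.singleton_subset_iff.mpr hbE⟩,
    hab, fun D hD => ?_⟩
  have hsub : D ⊆ {a, b} := hD.subset
  by_cases hbD : b ∈ D
  · by_cases haD : a ∈ D
    · exact absurd (hsub.antisymm (by simp [Set.insert_subset_iff, haD, hbD])) hD.ne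
    · refine hb.subset fun x hx => ?_
      rcases hsub hx with h | h
      · exact absurd (h ▸ hx) haD
      · exact h
  · refine ha.subset fun x hx => ?_
    rcases hsub hx with h | h
    · exact h
    · exact absurd (h ▸ hx) hbD

/-- The guts lemma: if `λ(X) ≤ 1` in a loopless matroid with no parallel pairs,
then the closure of `X` adds at most one element. -/
lemma closure_diff_subsingleton [M.Finite]
    (hloop : ∀ e ∈ M.E, M.Indep {e})
    (hpar : ¬ ∃ C, NDP.Circuit M C ∧ C.ncard = 2)
    (hX : X ⊆ M.E) (hlam : NDP.lam M X ≤ 1) :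
    (M.closure X \ X).Subsingleton := by
  intro a ha b hb
  by_contra hne
  set A := M.E \ X with hA
  have haE : a ∈ M.E := M.closure_subset_ground X ha.1
  have hbE : b ∈ M.E := M.closure_subset_ground X hb.1
  have haA : a ∈ A := ⟨haE, ha.2⟩
  have hbA : b ∈ A := ⟨hbE, hb.2⟩
  -- {a, b} is in the guts
  have hsub : ({a, b} : Set α) ⊆ M.closure X ∩ M.closure A := by
    rw [Set.insert_subset_iff, Set.singleton_subset_iff]
    exact ⟨⟨ha.1, M.subset_closure A diff_subset haA⟩,
      ⟨hb.1, M.subset_closure A diff_subset hbA⟩⟩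
  have h1 : NDP.rk M {a, b} ≤ NDP.rk M (M.closure X ∩ M.closure A) := rk_mono hsub
  have h2 := rk_submod (M := M) (M.closure X) (M.closure A)
  have h3 : NDP.rk M M.E ≤ NDP.rk M (M.closure X ∪ M.closure A) := by
    refine rk_mono fun x hx => ?_
    by_cases hxX : x ∈ X
    · exact Or.inl (M.subset_closure X hX hxX)
    · exact Or.inr (M.subset_closure A diff_subset ⟨hx, hxX⟩)
  have h4 : NDP.rk M (M.closure X) = NDP.rk M X := rk_closure
  have h5 : NDP.rk M (M.closure A) = NDP.rk M A := rk_closure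
  rw [lam_def, ← hA] at hlam
  have hrk : NDP.rk M {a, b} ≤ 1 := by omega
  have hdep : ¬ M.Indep {a, b} := fun hind => by
    have := le_rk hind Set.Subset.rfl
    rw [Set.ncard_pair hne] at this
    omega
  exact hpar ⟨{a, b}, pair_circuit M hne (hloop a haE) (hloop b hbE) hdep haE hbE,
    Set.ncard_pair hne⟩

end NDPAux

/-- In a connected matroid with no series or parallel pairs, the full
closure of one side of a 2-separation gives another 2-separation. -/
theorem stmt10 (M : Matroid α) [M.Finite] (hconn : NDP.Connected M)
    (hpar : ¬ ∃ C, NDP.Circuit M C ∧ C.ncard = 2)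
    (hser : ¬ ∃ C, NDP.Cocircuit M C ∧ C.ncard = 2)
    (X Y : Set α) (hsep : NDP.IsKSeparation M 2 X) (hY : Y = M.E \ X) :
    NDP.IsKSeparation M 2 (NDP.fcl M X) ∧
      M.E \ NDP.fcl M X = Y \ NDP.fcl M X := by
  classical
  obtain ⟨⟨hXE, hlamX⟩, hX2, hY2⟩ := hsep
  have hEfin := M.ground_finite
  have hlamX1 : NDP.lam M X ≤ 1 := hlamX.trans (by norm_num)
  -- no 1-separations
  have h1sep : ∀ e ∈ M.E, ¬ (NDP.lam M {e} ≤ 0) := by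
    intro e heE hle
    refine hconn {e} ⟨⟨Set.singleton_subset_iff.mpr heE, hle.trans (by norm_num)⟩,
      by simp, ?_⟩
    have hX1 : 1 < X.ncard := hX2
    obtain ⟨x, y, hx, hy, hxy⟩ := (Set.one_lt_ncard_iff (hEfin.subset hXE)).mp hX1
    have hz : ∃ z, z ∈ M.E \ {e} := by
      by_cases hxe : x = e
      · exact ⟨y, hXE hy, by simp [← hxe, Ne.symm hxy]⟩
      · exact ⟨x, hXE hx, by simp [hxe]⟩
    obtain ⟨z, hz⟩ := hz
    have := (Set.ncard_pos hEfin.diff).mpr ⟨z, hz⟩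
    omega
  -- no loops
  have hnlM : ∀ e ∈ M.E, M.Indep {e} := by
    intro e heE
    by_contra hdep
    have hrk0 : NDP.rk M {e} = 0 := by
      refine Nat.le_zero.mp (NDPAux.rk_le fun I hI hIe => ?_)
      rcases Set.subset_singleton_iff_eq.mp hIe with rfl | rfl
      · simp
      · exact absurd hI hdep
    refine h1sep e heE ?_
    rw [NDPAux.lam_def, hrk0]
    have := NDPAux.rk_mono (M := M) (diff_subset (s := M.E) (t := {e}))
    omega
  -- no coloops
  have hnlD : ∀ e ∈ M.E, M✶.Indep {e} := by
    intro e heE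
    by_contra hdep
    have hrk0 : NDP.rk M✶ {e} = 0 := by
      refine Nat.le_zero.mp (NDPAux.rk_le fun I hI hIe => ?_)
      rcases Set.subset_singleton_iff_eq.mp hIe with rfl | rfl
      · simp
      · exact absurd hI hdep
    have hdualeq := NDPAux.rk_dual_eq (M := M) (X := {e}) (Set.singleton_subset_iff.mpr heE)
    rw [hrk0, Set.ncard_singleton] at hdualeq
    have hrk1 : NDP.rk M {e} ≤ 1 :=
      (NDPAux.rk_le_ncard (Set.finite_singleton e)).trans_eq (Set.ncard_singleton e)
    refine h1sep e heE ?_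
    rw [NDPAux.lam_def]
    omega
  -- single-step closure lemmas
  have hstepM : ∀ W, W ⊆ M.E → NDP.lam M W ≤ 1 → (M.closure W \ W).Subsingleton :=
    fun W hW h => NDPAux.closure_diff_subsingleton hnlM hpar hW h
  have hstepD : ∀ W, W ⊆ M.E → NDP.lam M W ≤ 1 → (M✶.closure W \ W).Subsingleton := by
    intro W hW h
    exact NDPAux.closure_diff_subsingleton (M := M✶) hnlD hser hW
      (by rw [NDPAux.lam_dual hW]; exact h)
  -- the alternating closure chain
  let g : ℕ → Set α := fun n =>
    Nat.rec X (fun k Z => if k % 2 = 0 then M.closure Z else M✶.closure Z) n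
  have hg0 : g 0 = X := rfl
  have hgs : ∀ n, g (n+1) = if n % 2 = 0 then M.closure (g n) else M✶.closure (g n) :=
    fun n => rfl
  have hgE : ∀ n, g n ⊆ M.E := by
    intro n; induction n with
    | zero => exact hXE
    | succ k ih =>
      rw [hgs k]; split
      · exact M.closure_subset_ground _
      · exact M✶.closure_subset_ground _
  have hgmono : ∀ n, g n ⊆ g (n+1) := by
    intro n; rw [hgs n]; split
    · exact M.subset_closure _ (hgE n)
    · exact M✶.subset_closure _ (hgE n)
  have hglam : ∀ n, NDP.lam M (g n) ≤ 1 := by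
    intro n; induction n with
    | zero => exact hlamX1
    | succ k ih =>
      rw [hgs k]; split
      · exact (NDPAux.lam_closure_le (hgE k)).trans ih
      · exact (NDPAux.lam_coclosure_le (hgE k)).trans ih
  have hgstep : ∀ n, (g (n+1) \ g n).Subsingleton := by
    intro n; rw [hgs n]; split
    · exact hstepM _ (hgE n) (hglam n)
    · exact hstepD _ (hgE n) (hglam n)
  -- the chain stabilizes
  have hfix : ∃ n, g (n+1) = g n ∧ g (n+2) = g (n+1) := by
    refine Classical.byContradiction fun hcon => ?_
    push_neg at hcon
    have hgrow : ∀ n, (g n).ncard + 1 ≤ (g (n+2)).ncard := by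
      intro n
      have hfin : (g (n+2)).Finite := hEfin.subset (hgE (n+2))
      rcases eq_or_ne (g (n+1)) (g n) with he | he
      · have hne := hcon n he
        have hss : g (n+1) ⊂ g (n+2) := (hgmono (n+1)).ssubset_of_ne (fun h => hne h.symm)
        have hlt := Set.ncard_lt_ncard hss hfin
        rw [← he]
        exact hlt
      · have hss : g n ⊂ g (n+1) := (hgmono n).ssubset_of_ne (fun h => he h.symm)
        have h1 := Set.ncard_lt_ncard hss (hEfin.subset (hgE (n+1)))
        have h2 : (g (n+1)).ncard ≤ (g (n+2)).ncard := Set.ncard_le_ncard (hgmono (n+1)) hfin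
        omega
    have hbound : ∀ k, k ≤ (g (2*k)).ncard := by
      intro k; induction k with
      | zero => omega
      | succ m ih =>
        have h1 := hgrow (2*m)
        have h2m : 2*(m+1) = 2*m+2 := by ring
        rw [h2m]
        omega
    have hb1 := hbound (M.E.ncard + 1)
    have hb2 := Set.ncard_le_ncard (hgE (2*(M.E.ncard+1))) hEfin
    omega
  obtain ⟨N, hN1, hN2⟩ := hfix
  -- g N is fully closed
  have hclN : M.closure (g N) = g N ∧ M✶.closure (g N) = g N := by
    have e1 := hgs N
    have e2 := hgs (N+1)
    by_cases hp : N % 2 = 0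
    · rw [if_pos hp] at e1
      rw [if_neg (by omega)] at e2
      rw [hN1] at e2
      refine ⟨by rw [← e1]; exact hN1, by rw [← e2, hN2, hN1]⟩
    · rw [if_neg hp] at e1
      rw [if_pos (by omega)] at e2
      rw [hN1] at e2
      refine ⟨by rw [← e2, hN2, hN1], by rw [← e1]; exact hN1⟩
  have hXg : ∀ n, X ⊆ g n := by
    intro n; induction n with
    | zero => exact Set.Subset.rfl
    | succ k ih => exact ih.trans (hgmono k)
  have hXF : X ⊆ g N := hXg N
  -- fcl X = g N
  have hfcl : NDP.fcl M X = g N := by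
    apply subset_antisymm
    · exact sInter_subset_of_mem ⟨hXF, hclN.1, hclN.2⟩
    · refine subset_sInter fun F' hF' => ?_
      obtain ⟨hXF', hc1, hc2⟩ := hF'
      have hall : ∀ n, g n ⊆ F' := by
        intro n; induction n with
        | zero => exact hXF'
        | succ k ih =>
          rw [hgs k]; split
          · exact (M.closure_subset_closure ih).trans hc1.subset
          · exact (M✶.closure_subset_closure ih).trans hc2.subset
      exact hall N
  have hFE : g N ⊆ M.E := hgE N
  have hF2 : 2 ≤ (g N).ncard := hX2.trans (Set.ncard_le_ncard hXF (hEfin.subset hFE))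
  -- the complement of fcl X has at least two elements
  have hcomp2 : 2 ≤ (M.E \ g N).ncard := by
    by_contra hlt
    push_neg at hlt
    have hstep' : ∀ m, (M.E \ g m).ncard ≤ (M.E \ g (m+1)).ncard + 1 := by
      intro m
      have hsub2 : M.E \ g m ⊆ (M.E \ g (m+1)) ∪ (g (m+1) \ g m) := by
        intro x hx
        by_cases hxg : x ∈ g (m+1)
        · exact Or.inr ⟨hxg, hx.2⟩
        · exact Or.inl ⟨hx.1, hxg⟩
      have h1 : (M.E \ g m).ncard ≤ ((M.E \ g (m+1)) ∪ (g (m+1) \ g m)).ncard :=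
        Set.ncard_le_ncard hsub2
          (((hEfin.diff)).union ((hEfin.subset (hgE (m+1))).diff))
      have h2 := Set.ncard_union_le (M.E \ g (m+1)) (g (m+1) \ g m)
      have h3 : (g (m+1) \ g m).ncard ≤ 1 :=
        (Set.ncard_le_one ((hEfin.subset (hgE (m+1))).diff)).mpr
          (fun a ha b hb => hgstep m ha hb)
      omega
    have hIVT : ∀ n, (M.E \ g n).ncard ≤ 1 → ∃ k, (M.E \ g k).ncard = 2 := by
      intro n; induction n with
      | zero => intro h; rw [hg0] at h; omega
      | succ m ih =>
        intro h
        by_cases hm : (M.E \ g m).ncard ≤ 1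
        · exact ih hm
        · have := hstep' m
          exact ⟨m, by omega⟩
    obtain ⟨k, hk⟩ := hIVT N (by omega)
    obtain ⟨a, b, hab, habeq⟩ := Set.ncard_eq_two.mp hk
    have hWE := hgE k
    have hmemab : ∀ x ∈ ({a, b} : Set α), x ∈ M.E \ g k := by
      intro x hx; rw [habeq]; exact hx
    have habE : ({a, b} : Set α) ⊆ M.E := fun x hx => (hmemab x hx).1
    have haE : a ∈ M.E := habE (by simp)
    have hbE : b ∈ M.E := habE (by simp [Set.mem_insert_iff])
    have hiM : M.Indep {a, b} := by
      by_contra hdep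
      exact hpar ⟨{a, b}, NDPAux.pair_circuit M hab (hnlM a haE) (hnlM b hbE) hdep haE hbE,
        Set.ncard_pair hab⟩
    have hiD : M✶.Indep {a, b} := by
      by_contra hdep
      exact hser ⟨{a, b}, NDPAux.pair_circuit M✶ hab (hnlD a haE) (hnlD b hbE) hdep haE hbE,
        Set.ncard_pair hab⟩
    have h2M : 2 ≤ NDP.rk M {a, b} := by
      have := NDPAux.le_rk hiM Set.Subset.rfl
      rwa [Set.ncard_pair hab] at this
    have h2D : 2 ≤ NDP.rk M✶ {a, b} := by
      have := NDPAux.le_rk hiD Set.Subset.rfl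
      rwa [Set.ncard_pair hab] at this
    have hlamk := hglam k
    rw [NDPAux.lam_def, habeq] at hlamk
    have hdual := NDPAux.rk_dual_eq (M := M) (X := {a, b}) habE
    have hcompl : M.E \ {a, b} = g k := by rw [← habeq, diff_diff_cancel_left hWE]
    rw [hcompl, Set.ncard_pair hab] at hdual
    omega
  rw [hfcl]
  refine ⟨⟨⟨hFE, (hglam N).trans (by norm_num)⟩, hF2, hcomp2⟩, ?_⟩
  rw [hY, Set.diff_diff, Set.union_eq_self_of_subset_left hXF]
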